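/- Let A = k[x_1,...,x_m]/I be a standard graded algebra of dimension d over an infinite field k. There exists a descending chain of projective varieties V_0 ⊇ V_1 ⊇ V_2 ⊇ ... in P_k^{md−1} (defined as zero loci of the ideals of maximal minors of the generic matrices M_n(u)) such that for every α ∈ P_k^{md−1} parameterizing an ideal Q generated by d linear forms, and every n ≥ 0: Q is a minimal reduction of A with r_Q(A) = n if and only if α ∈ V_n \ V_{n+1}. -/

import Mathlib

set_option synthInstance.maxHeartbeats 1000000
set_option maxHeartbeats 1000000

open MvPolynomial

/-- The degree-`n` graded component of the standard graded algebra `A = k[x₁,...,xₘ]/I`. -/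
noncomputable def gpiece (k : Type*) [Field k] (m : ℕ)
    (I : Ideal (MvPolynomial (Fin m) k)) (n : ℕ) :
    Submodule k (MvPolynomial (Fin m) k ⧸ I) :=
  (homogeneousSubmodule (Fin m) k n).map (Ideal.Quotient.mkₐ k I).toLinearMap

/-- `Q_n = A_n`. -/
def gfull {k : Type*} [Field k] {m : ℕ} (I : Ideal (MvPolynomial (Fin m) k))
    (Q : Ideal (MvPolynomial (Fin m) k ⧸ I)) (n : ℕ) : Prop :=
  gpiece k m I n ≤ Q.restrictScalars k

/-- `Q` is a minimal reduction of `A = R/I` of dimension `d`: it is generated by `d`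
linear forms and `Q_n = A_n` for all large `n`. -/
def isMinRed (k : Type*) [Field k] (m d : ℕ) (I : Ideal (MvPolynomial (Fin m) k))
    (Q : Ideal (MvPolynomial (Fin m) k ⧸ I)) : Prop :=
  (∃ y : Fin d → MvPolynomial (Fin m) k,
      (∀ i, y i ∈ homogeneousSubmodule (Fin m) k 1) ∧
      Q = Ideal.span (Set.range fun i => Ideal.Quotient.mk I (y i))) ∧
  (∃ N : ℕ, ∀ n ≥ N, gfull I Q n)

/-- The reduction number `r_Q(A) = min{n : Q_{n+1} = A_{n+1}}`. -/
noncomputable def redNum {k : Type*} [Field k] {m : ℕ}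
    (I : Ideal (MvPolynomial (Fin m) k))
    (Q : Ideal (MvPolynomial (Fin m) k ⧸ I)) : ℕ :=
  sInf {n : ℕ | gfull I Q (n + 1)}

/-- The reduction number `r(A) = min{r_Q(A) : Q a minimal reduction of A}`,
for `A = R/I` of dimension `d`. -/
noncomputable def rAlg (k : Type*) [Field k] (m d : ℕ)
    (I : Ideal (MvPolynomial (Fin m) k)) : ℕ :=
  sInf {r : ℕ | ∃ Q, isMinRed k m d I Q ∧ redNum I Q = r}

/-- The ideal of `A = R/I` generated by the `d` linear forms with coefficient matrix `α`. -/
noncomputable def paramIdeal (k : Type*) [Field k] (m d : ℕ)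
    (I : Ideal (MvPolynomial (Fin m) k)) (α : Fin d × Fin m → k) :
    Ideal (MvPolynomial (Fin m) k ⧸ I) :=
  Ideal.span (Set.range fun i : Fin d =>
    Ideal.Quotient.mk I (∑ j : Fin m, C (α (i, j)) * X j))

section Stmt6Aux

variable {k : Type*} [Field k] {m : ℕ}

lemma degSumUniv (μ : Fin m →₀ ℕ) : μ.degree = ∑ j, μ j := by
  rw [Finsupp.degree]
  exact Finset.sum_subset (Finset.subset_univ _) (fun x _ hx => Finsupp.notMem_support_iff.mp hx)

lemma hcMulLinear (c y : MvPolynomial (Fin m) k) (hy : y.IsHomogeneous 1) (n : ℕ) :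
    homogeneousComponent (n + 1) (c * y) = homogeneousComponent n c * y := by
  conv_lhs => rw [← sum_homogeneousComponent c, Finset.sum_mul]
  rw [map_sum]
  have h1 : ∀ t, homogeneousComponent (n + 1) (homogeneousComponent t c * y)
      = if n + 1 = t + 1 then homogeneousComponent t c * y else 0 := fun t =>
    homogeneousComponent_of_mem
      ((mem_homogeneousSubmodule _ _).2 ((homogeneousComponent_isHomogeneous t c).mul hy))
  simp_rw [h1, Nat.add_right_cancel_iff]
  rw [Finset.sum_ite_eq]
  split_ifs with h
  · rfl
  · rw [homogeneousComponent_eq_zero, zero_mul]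
    exact Nat.lt_of_succ_le (Nat.le_of_not_lt (fun hc => h (Finset.mem_range.mpr hc)))

instance gpieceFD (I : Ideal (MvPolynomial (Fin m) k)) (N : ℕ) :
    FiniteDimensional k (gpiece k m I N) := by
  have : FiniteDimensional k (homogeneousSubmodule (Fin m) k N) :=
    Submodule.finiteDimensional_of_le (S₂ := restrictTotalDegree (Fin m) k N)
      (fun p hp => (mem_restrictTotalDegree _ _ _).2
        ((mem_homogeneousSubmodule _ _).1 hp).totalDegree_le)
  exact Module.Finite.map _ _

lemma mem_gpiece_iff {I : Ideal (MvPolynomial (Fin m) k)} {N : ℕ}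
    {x : MvPolynomial (Fin m) k ⧸ I} :
    x ∈ gpiece k m I N ↔ ∃ p : MvPolynomial (Fin m) k,
      p.IsHomogeneous N ∧ Ideal.Quotient.mk I p = x := by
  simp [gpiece, Submodule.mem_map, mem_homogeneousSubmodule, Ideal.Quotient.mkₐ_eq_mk]

lemma gfull_step {I : Ideal (MvPolynomial (Fin m) k)}
    {Q : Ideal (MvPolynomial (Fin m) k ⧸ I)} {N : ℕ} (h : gfull I Q N) :
    gfull I Q (N + 1) := by
  intro x hx
  obtain ⟨p, hp, rfl⟩ := mem_gpiece_iff.1 hx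
  rw [Submodule.restrictScalars_mem]
  rw [as_sum p, map_sum]
  refine Ideal.sum_mem _ (fun μ hμ => ?_)
  have degW : ∀ ν : Fin m →₀ ℕ, (Finsupp.weight 1) ν = ν.degree := fun ν => by
    rw [Finsupp.degree_eq_weight_one]; rfl
  have hdeg : μ.degree = N + 1 := by rw [← degW]; exact hp (mem_support_iff.mp hμ)
  have hne : μ ≠ 0 := by
    intro h0
    rw [h0, map_zero] at hdeg
    exact (Nat.succ_ne_zero N) hdeg.symm
  obtain ⟨j, hj⟩ := Finsupp.support_nonempty_iff.mpr hne
  have hle : Finsupp.single j 1 ≤ μ :=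
    Finsupp.single_le_iff.mpr (Nat.one_le_iff_ne_zero.mpr (Finsupp.mem_support_iff.mp hj))
  have hsum : Finsupp.single j 1 + (μ - Finsupp.single j 1) = μ := add_tsub_cancel_of_le hle
  have hmono : monomial μ (coeff μ p)
      = X j * monomial (μ - Finsupp.single j 1) (coeff μ p) := by
    rw [X, monomial_mul, one_mul, hsum]
  rw [hmono, map_mul]
  refine Ideal.mul_mem_left _ _ ?_
  have hdeg2 : (μ - Finsupp.single j 1).degree = N := by
    have hsing : ∑ i, (Finsupp.single j 1 : Fin m →₀ ℕ) i = 1 := by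
      simp [Finsupp.single_apply]
    have e1 : ∑ i, (Finsupp.single j 1 : Fin m →₀ ℕ) i
        + ∑ i, (μ - Finsupp.single j 1 : Fin m →₀ ℕ) i = ∑ i, μ i := by
      rw [← Finset.sum_add_distrib]
      simp_rw [← Finsupp.add_apply]
      rw [hsum]
    have hdeg' : ∑ i, μ i = N + 1 := by rw [← degSumUniv]; exact hdeg
    rw [degSumUniv]
    omega
  have : Ideal.Quotient.mk I (monomial (μ - Finsupp.single j 1) (coeff μ p)) ∈ gpiece k m I N :=
    mem_gpiece_iff.2 ⟨_, isHomogeneous_monomial _ hdeg2, rfl⟩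
  exact h this

lemma gfull_of_le {I : Ideal (MvPolynomial (Fin m) k)}
    {Q : Ideal (MvPolynomial (Fin m) k ⧸ I)} {N M : ℕ} (h : gfull I Q N) (hNM : N ≤ M) :
    gfull I Q M := by
  induction M, hNM using Nat.le_induction with
  | base => exact h
  | succ M hm ih => exact gfull_step ih

end Stmt6Aux
section Stmt6Aux2

variable {k : Type*} [Field k] {m : ℕ}

/-- The linear form with coefficients from row `i` of `α`. -/
noncomputable def yLin {d : ℕ} (α : Fin d × Fin m → k) (i : Fin d) : MvPolynomial (Fin m) k :=
  ∑ j, C (α (i, j)) * X j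

lemma yLin_hom {d : ℕ} (α : Fin d × Fin m → k) (i : Fin d) : (yLin α i).IsHomogeneous 1 :=
  IsHomogeneous.sum _ _ _ fun j _ => isHomogeneous_C_mul_X _ _

lemma paramIdeal_eq (d : ℕ) (I : Ideal (MvPolynomial (Fin m) k)) (α : Fin d × Fin m → k) :
    paramIdeal k m d I α = Ideal.span (Set.range fun i => Ideal.Quotient.mk I (yLin α i)) := rfl

/-- Generators of the degree `n+1` part of the parameterized ideal. -/
noncomputable def genA {d : ℕ} (α : Fin d × Fin m → k) (n : ℕ)
    (c : Fin d × (Fin m → Fin (n + 1))) : MvPolynomial (Fin m) k :=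
  if (∑ i, (c.2 i : ℕ)) = n then (∏ i, X i ^ (c.2 i : ℕ)) * yLin α c.1 else 0

lemma genA_hom {d : ℕ} (α : Fin d × Fin m → k) (n : ℕ) (c : Fin d × (Fin m → Fin (n + 1))) :
    (genA α n c).IsHomogeneous (n + 1) := by
  unfold genA
  split_ifs with hc
  · have h1 : (∏ i, (X i : MvPolynomial (Fin m) k) ^ (c.2 i : ℕ)).IsHomogeneous n := by
      have h2 := IsHomogeneous.prod Finset.univ
        (fun i => (X i : MvPolynomial (Fin m) k) ^ (c.2 i : ℕ)) (fun i => (c.2 i : ℕ))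
        (fun i _ => isHomogeneous_X_pow _ _)
      simp only [hc] at h2
      exact h2
    exact h1.mul (yLin_hom α c.1)
  · exact isHomogeneous_zero _ _ _

noncomputable def Wspan {d : ℕ} (I : Ideal (MvPolynomial (Fin m) k)) (α : Fin d × Fin m → k)
    (n : ℕ) : Submodule k (MvPolynomial (Fin m) k ⧸ I) :=
  Submodule.span k (Set.range fun c : Fin d × (Fin m → Fin (n + 1)) =>
    Ideal.Quotient.mk I (genA α n c))

lemma Wspan_le_gpiece {d : ℕ} (I : Ideal (MvPolynomial (Fin m) k)) (α : Fin d × Fin m → k)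
    (n : ℕ) : Wspan I α n ≤ gpiece k m I (n + 1) := by
  rw [Wspan, Submodule.span_le]
  rintro x ⟨c, rfl⟩
  exact mem_gpiece_iff.2 ⟨_, genA_hom α n c, rfl⟩

lemma mk_mul_yLin_mem_W {d : ℕ} {I : Ideal (MvPolynomial (Fin m) k)} {α : Fin d × Fin m → k}
    {n : ℕ} (e : MvPolynomial (Fin m) k) (he : e.IsHomogeneous n) (i : Fin d) :
    Ideal.Quotient.mk I (e * yLin α i) ∈ Wspan I α n := by
  rw [show e * yLin α i = ∑ μ ∈ e.support, monomial μ (coeff μ e) * yLin α i by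
    rw [← Finset.sum_mul, ← as_sum], map_sum]
  refine Submodule.sum_mem _ (fun μ hμ => ?_)
  have hdeg : μ.degree = n := by
    rw [← (by rw [Finsupp.degree_eq_weight_one]; rfl : (Finsupp.weight 1) μ = μ.degree)]
    exact he (mem_support_iff.mp hμ)
  have hlt : ∀ j, μ j < n + 1 := fun j =>
    Nat.lt_succ_of_le (hdeg ▸ Finsupp.le_degree j μ)
  set c : Fin d × (Fin m → Fin (n + 1)) := (i, fun j => ⟨μ j, hlt j⟩) with hc
  have hcond : (∑ j, ((c.2 j : ℕ))) = n := by
    simp only [hc]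
    rw [← degSumUniv μ] at *
    exact hdeg
  have hprod : (∏ j, (X j : MvPolynomial (Fin m) k) ^ (c.2 j : ℕ)) = monomial μ 1 := by
    simp only [hc]
    rw [← prod_X_pow_eq_monomial]
    exact (Finset.prod_subset (Finset.subset_univ _) (fun j _ hj => by
      rw [Finsupp.notMem_support_iff.mp hj, pow_zero])).symm
  have hgen : genA α n c = monomial μ 1 * yLin α i := by
    rw [genA, if_pos hcond, hprod]
  have hterm : monomial μ (coeff μ e) * yLin α i
      = coeff μ e • (monomial μ 1 * yLin α i) := by
    rw [← smul_mul_assoc, smul_monomial, smul_eq_mul, mul_one]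
  have hsmul : Ideal.Quotient.mk I (coeff μ e • (monomial μ 1 * yLin α i))
      = coeff μ e • Ideal.Quotient.mk I (monomial μ 1 * yLin α i) := by
    rw [← Ideal.Quotient.mkₐ_eq_mk k I]
    exact map_smul (Ideal.Quotient.mkₐ k I) _ _
  rw [hterm, hsmul]
  refine Submodule.smul_mem _ _ (Submodule.subset_span ⟨c, ?_⟩)
  show Ideal.Quotient.mk I (genA α n c) = _
  rw [hgen]

lemma gfull_succ_iff_W {d : ℕ} {I : Ideal (MvPolynomial (Fin m) k)}
    (hI : ∀ f ∈ I, ∀ n : ℕ, homogeneousComponent n f ∈ I)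
    (α : Fin d × Fin m → k) (n : ℕ) :
    gfull I (paramIdeal k m d I α) (n + 1) ↔ gpiece k m I (n + 1) ≤ Wspan I α n := by
  constructor
  · intro h x hx
    obtain ⟨p, hp, rfl⟩ := mem_gpiece_iff.1 hx
    have hpQ : Ideal.Quotient.mk I p ∈ paramIdeal k m d I α := h hx
    rw [paramIdeal_eq] at hpQ
    have hspan : (Set.range fun i => Ideal.Quotient.mk I (yLin α i))
        = Ideal.Quotient.mk I '' (Set.range (yLin α)) := by
      rw [← Set.range_comp]; rfl
    rw [hspan, ← Ideal.map_span] at hpQ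
    obtain ⟨q, hq, hqe⟩ := (Ideal.mem_map_iff_of_surjective _
      Ideal.Quotient.mk_surjective).1 hpQ
    obtain ⟨cf, rfl⟩ := Ideal.mem_span_range_iff_exists_fun.1 hq
    have hf : p - (∑ i, cf i * yLin α i) ∈ I := by
      rw [← Ideal.Quotient.eq] at *
      exact hqe.symm
    have hcomp : homogeneousComponent (n + 1) (p - ∑ i, cf i * yLin α i) ∈ I :=
      hI _ hf _
    have hp' : homogeneousComponent (n + 1) p = p := by
      rw [homogeneousComponent_of_mem ((mem_homogeneousSubmodule _ _).2 hp), if_pos rfl]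
    have hdecomp : homogeneousComponent (n + 1) (p - ∑ i, cf i * yLin α i)
        = p - ∑ i, homogeneousComponent n (cf i) * yLin α i := by
      rw [map_sub, hp', map_sum]
      congr 1
      refine Finset.sum_congr rfl (fun i _ => ?_)
      exact hcMulLinear (cf i) (yLin α i) (yLin_hom α i) n
    have : Ideal.Quotient.mk I p
        = Ideal.Quotient.mk I (∑ i, homogeneousComponent n (cf i) * yLin α i) := by
      rw [Ideal.Quotient.eq]
      rw [hdecomp] at hcomp
      exact hcomp
    rw [this, map_sum]
    exact Submodule.sum_mem _ (fun i _ =>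
      mk_mul_yLin_mem_W _ (homogeneousComponent_isHomogeneous n (cf i)) i)
  · intro h
    refine le_trans h ?_
    rw [Wspan, Submodule.span_le]
    rintro x ⟨c, rfl⟩
    rw [SetLike.mem_coe, Submodule.restrictScalars_mem]
    simp only [genA]
    split_ifs with hc
    · rw [map_mul]
      exact Ideal.mul_mem_left _ _
        (Ideal.subset_span ⟨c.1, rfl⟩)
    · simp
end Stmt6Aux2
section Stmt6Aux3

open Submodule in
theorem span_top_iff_det {k G : Type*} [Field k] [AddCommGroup G] [Module k G]
    [FiniteDimensional k G] {ρ ι : Type*} [Fintype ρ] [DecidableEq ρ] [Fintype ι]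
    (w : Module.Basis ρ k G) (v : ι → G) :
    Submodule.span k (Set.range v) = ⊤ ↔ ∃ g : ρ → ι, w.det (v ∘ g) ≠ 0 := by
  constructor
  · intro hsp
    obtain ⟨b, hb, hspb, hli⟩ := exists_linearIndependent k (Set.range v)
    rw [hsp] at hspb
    haveI : Fintype b := (hli.setFinite).fintype
    let B : Module.Basis b k G := Module.Basis.mk hli (by rw [Subtype.range_coe]; exact hspb.ge)
    let e : b ≃ ρ := B.indexEquiv w
    let B' : Module.Basis ρ k G := B.reindex e
    have hmem : ∀ j : ρ, ∃ c : ι, v c = B' j := by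
      intro j
      have : (B' j : G) ∈ b := by
        simp only [B', Module.Basis.reindex_apply, B, Module.Basis.mk_apply]
        exact (e.symm j).2
      obtain ⟨c, hc⟩ := hb this
      exact ⟨c, hc⟩
    choose g hg using hmem
    refine ⟨g, ?_⟩
    have : v ∘ g = ⇑B' := funext fun j => hg j
    rw [this]
    exact (w.isUnit_det B').ne_zero
  · rintro ⟨g, hg⟩
    have := (Module.Basis.is_basis_iff_det w).mpr (isUnit_iff_ne_zero.mpr hg)
    refine top_unique ?_
    rw [← this.2]
    exact Submodule.span_mono (Set.range_comp_subset_range g v)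

variable {k : Type*} [Field k] {m : ℕ}

noncomputable def genElt (I : Ideal (MvPolynomial (Fin m) k)) (n : ℕ) (j : Fin m)
    (f : Fin m → Fin (n + 1)) : MvPolynomial (Fin m) k :=
  if (∑ i, (f i : ℕ)) = n then (∏ i, X i ^ (f i : ℕ)) * X j else 0

lemma genElt_hom (I : Ideal (MvPolynomial (Fin m) k)) (n : ℕ) (j : Fin m)
    (f : Fin m → Fin (n + 1)) : (genElt I n j f).IsHomogeneous (n + 1) := by
  unfold genElt
  split_ifs with hc
  · have h2 := IsHomogeneous.prod Finset.univ
      (fun i => (X i : MvPolynomial (Fin m) k) ^ (f i : ℕ)) (fun i => (f i : ℕ))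
      (fun i _ => isHomogeneous_X_pow _ _)
    simp only [hc] at h2
    exact h2.mul (isHomogeneous_X _ _)
  · exact isHomogeneous_zero _ _ _

noncomputable def uElt (I : Ideal (MvPolynomial (Fin m) k)) (n : ℕ) (j : Fin m)
    (f : Fin m → Fin (n + 1)) : gpiece k m I (n + 1) :=
  ⟨Ideal.Quotient.mk I (genElt I n j f), mem_gpiece_iff.2 ⟨_, genElt_hom I n j f, rfl⟩⟩

noncomputable def vA (I : Ideal (MvPolynomial (Fin m) k)) {d : ℕ} (n : ℕ)
    (α : Fin d × Fin m → k) (c : Fin d × (Fin m → Fin (n + 1))) : gpiece k m I (n + 1) :=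
  ∑ j, α (c.1, j) • uElt I n j c.2

lemma vA_val (I : Ideal (MvPolynomial (Fin m) k)) {d : ℕ} (n : ℕ)
    (α : Fin d × Fin m → k) (c : Fin d × (Fin m → Fin (n + 1))) :
    (vA I n α c : MvPolynomial (Fin m) k ⧸ I) = Ideal.Quotient.mk I (genA α n c) := by
  have : (vA I n α c : MvPolynomial (Fin m) k ⧸ I)
      = ∑ j, α (c.1, j) • Ideal.Quotient.mk I (genElt I n j c.2) := by
    rw [vA, AddSubmonoidClass.coe_finset_sum]
    exact Finset.sum_congr rfl (fun j _ => rfl)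
  rw [this]
  rw [← Ideal.Quotient.mkₐ_eq_mk k I]
  simp only [← map_smul (Ideal.Quotient.mkₐ k I), ← map_sum (Ideal.Quotient.mkₐ k I)]
  congr 1
  simp only [genElt, genA]
  split_ifs with hc
  · rw [yLin, Finset.mul_sum]
    refine Finset.sum_congr rfl (fun j _ => ?_)
    rw [smul_eq_C_mul]
    ring
  · simp

noncomputable def PMat (I : Ideal (MvPolynomial (Fin m) k)) (d n : ℕ) :
    Matrix (Fin (Module.finrank k (gpiece k m I (n + 1))))
      (Fin d × (Fin m → Fin (n + 1))) (MvPolynomial (Fin d × Fin m) k) :=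
  Matrix.of fun b c => ∑ j,
    C (((Module.finBasis k (gpiece k m I (n + 1))).repr (uElt I n j c.2)) b) * X (c.1, j)

noncomputable def minorsSet (I : Ideal (MvPolynomial (Fin m) k)) (d n : ℕ) :
    Set (MvPolynomial (Fin d × Fin m) k) :=
  Set.range fun g : Fin (Module.finrank k (gpiece k m I (n + 1)))
      → Fin d × (Fin m → Fin (n + 1)) => ((PMat I d n).submatrix id g).det

lemma minorsSet_hom (I : Ideal (MvPolynomial (Fin m) k)) (d n : ℕ) :
    ∀ p ∈ minorsSet I d n, p.IsHomogeneous (Module.finrank k (gpiece k m I (n + 1))) := by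
  rintro p ⟨g, rfl⟩
  dsimp only
  rw [Matrix.det_apply]
  refine IsHomogeneous.sum _ _ _ (fun σ _ => ?_)
  have hprod : (∏ b, ((PMat I d n).submatrix id g) (σ b) b).IsHomogeneous
      (Module.finrank k (gpiece k m I (n + 1))) := by
    have h2 := IsHomogeneous.prod Finset.univ
      (fun b => ((PMat I d n).submatrix id g) (σ b) b) (fun _ => 1)
      (fun b _ => by
        simp only [Matrix.submatrix_apply, PMat, Matrix.of_apply, id_eq]
        exact IsHomogeneous.sum _ _ _ (fun j _ => isHomogeneous_C_mul_X _ _))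
    simpa using h2
  rcases Int.units_eq_one_or (Equiv.Perm.sign σ) with h | h <;> rw [h]
  · simpa using hprod
  · have : ((-1 : ℤˣ) • ∏ b, ((PMat I d n).submatrix id g) (σ b) b)
        = -(∏ b, ((PMat I d n).submatrix id g) (σ b) b) := by
      rw [Units.smul_def]
      simp
    rw [this]
    exact hprod.neg

lemma minors_vanish_iff (I : Ideal (MvPolynomial (Fin m) k)) (d n : ℕ)
    (α : Fin d × Fin m → k) :
    (∀ p ∈ minorsSet I d n, eval α p = 0) ↔ ¬ (gpiece k m I (n + 1) ≤ Wspan I α n) := by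
  set G := gpiece k m I (n + 1)
  set w := Module.finBasis k G
  have h1 : ∀ g, eval α (((PMat I d n).submatrix id g).det) = w.det ((vA I n α) ∘ g) := by
    intro g
    rw [RingHom.map_det, Module.Basis.det_apply]
    congr 1
    ext b j
    simp only [RingHom.mapMatrix_apply, Matrix.map_apply, Matrix.submatrix_apply, id_eq, PMat,
      Matrix.of_apply, Module.Basis.toMatrix_apply, Function.comp_apply]
    rw [map_sum (eval α)]
    have hrepr : w.repr (vA I n α (g j)) b
        = ∑ j', α ((g j).1, j') * w.repr (uElt I n j' (g j).2) b := by
      rw [vA, map_sum]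
      rw [Finsupp.finset_sum_apply]
      refine Finset.sum_congr rfl (fun j' _ => ?_)
      rw [map_smul, Finsupp.smul_apply, smul_eq_mul]
    rw [hrepr]
    refine Finset.sum_congr rfl (fun j' _ => ?_)
    rw [eval_mul, eval_C, eval_X]
    exact mul_comm _ _
  have hW : Submodule.map G.subtype (Submodule.span k (Set.range (vA I n α))) = Wspan I α n := by
    rw [Submodule.map_span, Wspan]
    congr 1
    rw [← Set.range_comp]
    exact congrArg Set.range (funext fun c => vA_val I n α c)
  have h2 : (G ≤ Wspan I α n) ↔ Submodule.span k (Set.range (vA I n α)) = ⊤ := by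
    constructor
    · intro h
      apply Submodule.map_injective_of_injective (Submodule.injective_subtype G)
      rw [hW, Submodule.map_subtype_top]
      exact le_antisymm (Wspan_le_gpiece I α n) h
    · intro h
      have := congrArg (Submodule.map G.subtype) h
      rw [hW, Submodule.map_subtype_top] at this
      exact this.ge
  rw [h2, span_top_iff_det w (vA I n α)]
  rw [minorsSet]
  push_neg
  constructor
  · intro h g
    have := h _ ⟨g, rfl⟩
    dsimp only at this
    rw [h1 g] at this
    exact this
  · rintro h p ⟨g, rfl⟩
    dsimp only
    rw [h1 g]
    exact h g

end Stmt6Aux3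

/-- there is a descending chain of projective varieties
`V₀ ⊇ V₁ ⊇ ⋯` in `P_k^{md-1}` (zero loci of ideals generated by homogeneous
polynomials in the `md` coordinates, namely ideals of maximal minors of the generic
matrices `M_n(u)`) such that for every nonzero parameter point `α` and every `n ≥ 0`,
the ideal `Q` parameterized by `α` is a minimal reduction of `A` with `r_Q(A) = n`
if and only if `α ∈ V_n \ V_{n+1}`. -/
theorem stmt6 (k : Type*) [Field k] [Infinite k] (m d : ℕ)
    (I : Ideal (MvPolynomial (Fin m) k))
    (hI : ∀ f ∈ I, ∀ n : ℕ, homogeneousComponent n f ∈ I)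
    (hd : ringKrullDim (MvPolynomial (Fin m) k ⧸ I) = d) :
    ∃ J : ℕ → Set (MvPolynomial (Fin d × Fin m) k),
      (∀ n, ∀ p ∈ J n, ∃ s : ℕ, p.IsHomogeneous s) ∧
      (∀ n, {α : Fin d × Fin m → k | ∀ p ∈ J (n + 1), eval α p = 0} ⊆
            {α : Fin d × Fin m → k | ∀ p ∈ J n, eval α p = 0}) ∧
      (∀ (α : Fin d × Fin m → k), α ≠ 0 → ∀ n : ℕ,
        (isMinRed k m d I (paramIdeal k m d I α) ∧
            redNum I (paramIdeal k m d I α) = n) ↔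
          ((∀ p ∈ J n, eval α p = 0) ∧ ¬ (∀ p ∈ J (n + 1), eval α p = 0))) := by
  classical
  refine ⟨(fun N => match N with
    | 0 => (∅ : Set (MvPolynomial (Fin d × Fin m) k))
    | (s+1) => minorsSet I d s), ?_, ?_, ?_⟩
  · intro n p hp
    match n with
    | 0 => exact absurd hp (Set.notMem_empty p)
    | (s+1) => exact ⟨_, minorsSet_hom I d s p hp⟩
  · intro n α hα
    have key : ∀ (β : Fin d × Fin m → k) (t : ℕ),
        (∀ p ∈ minorsSet I d t, eval β p = 0) ↔ ¬ gfull I (paramIdeal k m d I β) (t + 1) :=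
      fun β t => (minors_vanish_iff I d t β).trans
        (not_congr (gfull_succ_iff_W hI β t)).symm
    match n with
    | 0 => intro p hp; exact absurd hp (Set.notMem_empty p)
    | (s+1) =>
      have h1 : ¬ gfull I (paramIdeal k m d I α) (s + 2) := (key α (s+1)).1 hα
      exact (key α s).2 (fun h => h1 (gfull_step h))
  · intro α _ n
    have key : ∀ t : ℕ,
        (∀ p ∈ minorsSet I d t, eval α p = 0) ↔ ¬ gfull I (paramIdeal k m d I α) (t + 1) :=
      fun t => (minors_vanish_iff I d t α).trans
        (not_congr (gfull_succ_iff_W hI α t)).symm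
    set Q := paramIdeal k m d I α with hQ
    have hredNum : redNum I Q = sInf {j : ℕ | gfull I Q (j + 1)} := rfl
    constructor
    · rintro ⟨hmr, hrn⟩
      have hne : {j : ℕ | gfull I Q (j + 1)}.Nonempty := by
        obtain ⟨N, hN⟩ := hmr.2
        exact ⟨N, hN (N + 1) (Nat.le_succ N)⟩
      have hmem : gfull I Q (n + 1) := by
        have := Nat.sInf_mem hne
        rw [← hredNum, hrn] at this
        exact this
      constructor
      · match n with
        | 0 => intro p hp; exact absurd hp (Set.notMem_empty p)
        | (s+1) =>
          refine (key s).2 ?_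
          have hs : s ∉ {j : ℕ | gfull I Q (j + 1)} := by
            refine Nat.notMem_of_lt_sInf ?_
            rw [← hredNum, hrn]
            exact Nat.lt_succ_self s
          exact hs
      · intro hcon
        exact ((key n).1 hcon) hmem
    · rintro ⟨h1, h2⟩
      have hfull : gfull I Q (n + 1) := by
        by_contra hc
        exact h2 ((key n).2 hc)
      have hmemS : n ∈ {j : ℕ | gfull I Q (j + 1)} := hfull
      refine ⟨⟨⟨yLin α, fun i => (mem_homogeneousSubmodule _ _).2 (yLin_hom α i),
        paramIdeal_eq d I α⟩, ⟨n + 1, fun j hj => gfull_of_le hfull hj⟩⟩, ?_⟩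
      rw [hredNum]
      refine le_antisymm (Nat.sInf_le hmemS) ?_
      match n with
      | 0 => exact Nat.zero_le _
      | (s+1) =>
        by_contra hcon
        have hlt : sInf {j : ℕ | gfull I Q (j + 1)} ≤ s := by omega
        have hInfMem := Nat.sInf_mem (⟨s + 1, hmemS⟩ : {j : ℕ | gfull I Q (j + 1)}.Nonempty)
        have : gfull I Q (s + 1) := gfull_of_le hInfMem (by omega)
        exact ((key s).1 h1) this
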